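/- arXiv:1306.5154 — 2 statements merged into one kernel-verified Lean document; each statement's English description precedes it below -/
import Mathlib

section
/- (Density Lemma) If G is a subgraph of a hypercube Q_n, then |E(G)| ≤ (1/2)|V(G)|·log₂|V(G)|, with equality if and only if G is (isomorphic to) a hypercube. -/
open Finset

/-- Number of positions where two binary strings differ. -/
def diffCount {n : ℕ} (u v : Fin n → Bool) : ℕ :=
  (Finset.univ.filter fun i => u i ≠ v i).card

/-- The hypercube Q_n: binary strings of length n, adjacent iff they differ in one position. -/
def hyperCube (n : ℕ) : SimpleGraph (Fin n → Bool) where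
  Adj u v := diffCount u v = 1
  symm := by
    constructor
    intro u v h
    have he : (Finset.univ.filter fun i => v i ≠ u i)
        = (Finset.univ.filter fun i => u i ≠ v i) := by
      apply Finset.filter_congr; intro i _; exact ne_comm
    simpa [diffCount, he] using h
  loopless := by constructor; intro u h; simp [diffCount] at h

instance (n : ℕ) : DecidableRel (hyperCube n).Adj := fun u v => Nat.decEq _ _



noncomputable def gfun (t : ℝ) : ℝ :=
  (2+t) * Real.log (2+t) - (1+t) * Real.log (1+t) - 2 * Real.log 2

lemma gfun_hasDeriv {t : ℝ} (ht : (0:ℝ) < t) :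
    HasDerivAt gfun (Real.log (2+t) - Real.log (1+t)) t := by
  have h1 : HasDerivAt (fun t : ℝ => (2+t) * Real.log (2+t)) (Real.log (2+t) + 1) t := by
    have := (Real.hasDerivAt_mul_log (x := 2+t) (by linarith)).comp t
      ((hasDerivAt_id t).const_add 2)
    simpa [Function.comp_def] using this
  have h2 : HasDerivAt (fun t : ℝ => (1+t) * Real.log (1+t)) (Real.log (1+t) + 1) t := by
    have := (Real.hasDerivAt_mul_log (x := 1+t) (by linarith)).comp t
      ((hasDerivAt_id t).const_add 1)
    simpa [Function.comp_def] using this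
  have := (h1.sub h2).sub_const (2 * Real.log 2)
  have e : Real.log (2+t) - Real.log (1+t) = Real.log (2+t) + 1 - (Real.log (1+t) + 1) := by ring
  rw [e]; exact this

lemma gfun_pos {t : ℝ} (ht : 0 < t) : 0 < gfun t := by
  have hc1 : ContinuousOn (fun t : ℝ => (2+t) * Real.log (2+t)) (Set.Ici 0) := by
    apply ContinuousOn.mul (by fun_prop)
    apply Real.continuousOn_log.comp (by fun_prop)
    intro x hx
    simp only [Set.mem_Ici] at hx
    simp only [Set.mem_compl_iff, Set.mem_singleton_iff]
    intro h; linarith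
  have hc2 : ContinuousOn (fun t : ℝ => (1+t) * Real.log (1+t)) (Set.Ici 0) := by
    apply ContinuousOn.mul (by fun_prop)
    apply Real.continuousOn_log.comp (by fun_prop)
    intro x hx
    simp only [Set.mem_Ici] at hx
    simp only [Set.mem_compl_iff, Set.mem_singleton_iff]
    intro h; linarith
  have hmono : StrictMonoOn gfun (Set.Ici (0:ℝ)) := by
    apply strictMonoOn_of_deriv_pos (convex_Ici 0) ((hc1.sub hc2).sub continuousOn_const)
    intro x hx
    rw [interior_Ici, Set.mem_Ioi] at hx
    rw [show deriv (((fun t : ℝ => (2+t) * Real.log (2+t)) - fun t : ℝ => (1+t) * Real.log (1+t)) - fun x : ℝ => 2 * Real.log 2) x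
        = Real.log (2+x) - Real.log (1+x) from (gfun_hasDeriv hx).deriv]
    have := Real.log_lt_log (by linarith : (0:ℝ) < 1 + x) (by linarith : (1:ℝ)+x < 2+x)
    linarith
  have h0 : gfun 0 = 0 := by norm_num [gfun]
  have := hmono (Set.self_mem_Ici) (Set.mem_Ici.2 ht.le) ht
  linarith [h0 ▸ this]

lemma gfun_expand {a b : ℝ} (ha : 0 < a) (hb : 0 < b) :
    a * gfun (b/a-1) =
      (a+b)*Real.log (a+b) - a*Real.log a - b*Real.log b - 2*a*Real.log 2 := by
  have h2u : 2 + (b/a-1) = (a+b)/a := by field_simp; ring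
  have h1u : 1 + (b/a-1) = b/a := by ring
  unfold gfun
  rw [h2u, h1u, Real.log_div (by positivity) (ne_of_gt ha),
    Real.log_div (ne_of_gt hb) (ne_of_gt ha)]
  field_simp
  ring

/-- key analytic inequality, natural-log form -/
lemma key_ineq {a b : ℝ} (ha : 0 < a) (hab : a ≤ b) :
    a * Real.log a + b * Real.log b + 2*a*Real.log 2 ≤ (a+b) * Real.log (a+b) := by
  rcases eq_or_lt_of_le hab with rfl | hlt
  · have : Real.log (a + a) = Real.log 2 + Real.log a := by
      rw [← Real.log_mul (by norm_num) (ne_of_gt ha)]; ring_nf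
    rw [this]
    nlinarith [ha]
  · have hb : 0 < b := lt_trans ha hlt
    have hu : 0 < b/a - 1 := by
      rw [sub_pos, lt_div_iff₀ ha]; linarith
    have hg := gfun_pos hu
    have expand := gfun_expand ha hb
    nlinarith

/-- strict version -/
lemma key_strict {a b : ℝ} (ha : 0 < a) (hab : a < b) :
    a * Real.log a + b * Real.log b + 2*a*Real.log 2 < (a+b) * Real.log (a+b) := by
  have hb : 0 < b := lt_trans ha hab
  have hu : 0 < b/a - 1 := by
    rw [sub_pos, lt_div_iff₀ ha]; linarith
  have hg := gfun_pos hu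
  have expand := gfun_expand ha hb
  nlinarith

lemma diffCount_eq_zero {n : ℕ} {u v : Fin n → Bool} : diffCount u v = 0 ↔ u = v := by
  unfold diffCount
  rw [Finset.card_eq_zero, Finset.filter_eq_empty_iff]
  constructor
  · intro h; funext i
    have := h (Finset.mem_univ i)
    simpa using this
  · intro h i _; simp [h]

lemma hyperCube_adj {n : ℕ} {u v : Fin n → Bool} :
    (hyperCube n).Adj u v ↔ diffCount u v = 1 := Iff.rfl

lemma diffCount_snoc {n : ℕ} (x y : Fin n → Bool) (a b : Bool) :
    diffCount (Fin.snoc x a) (Fin.snoc y b) = diffCount x y + (if a = b then 0 else 1) := by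
  unfold diffCount
  rw [Finset.card_filter, Finset.card_filter, Fin.sum_univ_castSucc]
  simp only [Fin.snoc_castSucc, Fin.snoc_last]
  congr 1
  by_cases h : a = b <;> simp [h]

lemma adj_snoc {n : ℕ} {x y : Fin n → Bool} {a b : Bool} :
    diffCount (Fin.snoc x a) (Fin.snoc y b) = 1 ↔
      (diffCount x y = 1 ∧ a = b) ∨ (x = y ∧ a ≠ b) := by
  rw [diffCount_snoc]
  by_cases h : a = b
  · simp [h]
  · rw [if_neg h]
    simp only [h, and_false, false_or, ne_eq, not_false_eq_true, and_true]
    rw [← diffCount_eq_zero]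
    omega

def qslice {n : ℕ} (S : Finset (Fin (n+1) → Bool)) (b : Bool) : Finset (Fin n → Bool) :=
  Finset.univ.filter fun x => Fin.snoc x b ∈ S

def DD (n : ℕ) (S : Finset (Fin n → Bool)) : ℕ :=
  ∑ u ∈ S, ∑ v ∈ S, if diffCount u v = 1 then 1 else 0

lemma sum_split {n : ℕ} (S : Finset (Fin (n+1) → Bool)) (g : (Fin (n+1) → Bool) → ℕ) :
    ∑ v ∈ S, g v = ∑ x ∈ qslice S false, g (Fin.snoc x false)
      + ∑ x ∈ qslice S true, g (Fin.snoc x true) := by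
  have key : ∀ b : Bool, ∑ v ∈ S.filter (fun v => v (Fin.last n) = b), g v
      = ∑ x ∈ qslice S b, g (Fin.snoc x b) := by
    intro b
    apply Finset.sum_nbij' (i := fun v => Fin.init v) (j := fun x => Fin.snoc x b)
    · intro v hv
      rw [Finset.mem_filter] at hv
      simp only [qslice, Finset.mem_filter, Finset.mem_univ, true_and]
      rw [← hv.2, Fin.snoc_init_self]
      exact hv.1
    · intro x hx
      simp only [qslice, Finset.mem_filter, Finset.mem_univ, true_and] at hx
      rw [Finset.mem_filter]
      exact ⟨hx, by simp⟩
    · intro v hv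
      rw [Finset.mem_filter] at hv
      rw [← hv.2, Fin.snoc_init_self]
    · intro x hx
      simp
    · intro v hv
      rw [Finset.mem_filter] at hv
      rw [← hv.2, Fin.snoc_init_self]
  rw [← key false, ← key true, ← Finset.sum_filter_add_sum_filter_not S (fun v => v (Fin.last n) = false)]
  congr 1
  apply Finset.sum_congr _ (fun _ _ => rfl)
  apply Finset.filter_congr
  intro v _
  simp

lemma card_split {n : ℕ} (S : Finset (Fin (n+1) → Bool)) :
    S.card = (qslice S false).card + (qslice S true).card := by
  have := sum_split S (fun _ => 1)
  simp only [Finset.sum_const, smul_eq_mul, mul_one] at this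
  exact this

lemma DD_split {n : ℕ} (S : Finset (Fin (n+1) → Bool)) :
    DD (n+1) S = DD n (qslice S false) + DD n (qslice S true)
      + 2 * (qslice S false ∩ qslice S true).card := by
  have cross : ∀ (A B : Finset (Fin n → Bool)),
      (∑ x ∈ A, ∑ y ∈ B, if x = y then (1:ℕ) else 0) = (A ∩ B).card := by
    intro A B
    have : ∀ x, (∑ y ∈ B, if x = y then (1:ℕ) else 0) = if x ∈ B then 1 else 0 := by
      intro x
      simp [Finset.sum_ite_eq]
    simp only [this]
    rw [Finset.sum_ite_mem]
    exact (Finset.card_eq_sum_ones _).symm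
  have esame : ∀ (b : Bool) (x y : Fin n → Bool),
      (if diffCount (Fin.snoc x b) (Fin.snoc y b) = 1 then (1:ℕ) else 0)
        = if diffCount x y = 1 then 1 else 0 := by
    intro b x y
    rw [diffCount_snoc, if_pos rfl, Nat.add_zero]
  have ediff : ∀ (a b : Bool) (x y : Fin n → Bool), a ≠ b →
      (if diffCount (Fin.snoc x a) (Fin.snoc y b) = 1 then (1:ℕ) else 0)
        = if x = y then 1 else 0 := by
    intro a b x y hab
    rw [diffCount_snoc, if_neg hab]
    by_cases h : x = y
    · subst h
      rw [if_pos rfl, if_pos (by rw [diffCount_eq_zero.2 rfl])]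
    · rw [if_neg h, if_neg]
      intro hc
      exact h (diffCount_eq_zero.1 (by omega))
  unfold DD
  rw [sum_split S]
  rw [Finset.sum_congr rfl (fun x _ => sum_split S fun v => if diffCount (Fin.snoc x false) v = 1 then 1 else 0)]
  rw [Finset.sum_congr rfl (fun x _ => sum_split S fun v => if diffCount (Fin.snoc x true) v = 1 then 1 else 0)]
  simp only [esame, fun x y => ediff false true x y (by simp), fun x y => ediff true false x y (by simp)]
  rw [Finset.sum_add_distrib, Finset.sum_add_distrib]
  have h1 := cross (qslice S false) (qslice S true)
  have h2 := cross (qslice S true) (qslice S false)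
  rw [Finset.inter_comm] at h2
  omega

lemma snoc_init_eq {n : ℕ} (v : Fin (n+1) → Bool) (c : Bool) (h : v (Fin.last n) = c) :
    Fin.snoc (Fin.init v) c = v := by
  rw [← h, Fin.snoc_init_self]

def isoDegenerate {n : ℕ} (S : Finset (Fin (n+1) → Bool)) (c : Bool)
    (h : ∀ v ∈ S, v (Fin.last n) = c) :
    ((hyperCube (n+1)).induce (S : Set (Fin (n+1) → Bool))) ≃g
      ((hyperCube n).induce ((qslice S c : Finset (Fin n → Bool)) : Set (Fin n → Bool))) where
  toFun := fun v => ⟨Fin.init v.1, by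
    simp only [Finset.coe_filter, qslice, Set.mem_setOf_eq, Finset.mem_univ, true_and]
    rw [snoc_init_eq v.1 c (h v.1 v.2)]
    exact v.2⟩
  invFun := fun x => ⟨Fin.snoc x.1 c, by
    have := x.2
    simp only [Finset.coe_filter, qslice, Set.mem_setOf_eq, Finset.mem_univ, true_and] at this
    exact this⟩
  left_inv := fun v => Subtype.ext (snoc_init_eq v.1 c (h v.1 v.2))
  right_inv := fun x => Subtype.ext (by simp)
  map_rel_iff' := by
    intro v w
    show (hyperCube n).Adj _ _ ↔ (hyperCube (n+1)).Adj v.1 w.1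
    rw [hyperCube_adj, hyperCube_adj]
    conv_rhs => rw [← snoc_init_eq v.1 c (h v.1 v.2), ← snoc_init_eq w.1 c (h w.1 w.2)]
    rw [adj_snoc]
    simp only [ne_eq, not_true_eq_false, and_false, or_false, and_true]
    exact Iff.rfl

def isoDouble {n m : ℕ} (S : Finset (Fin (n+1) → Bool))
    (heq : qslice S false = qslice S true)
    (φ : ((hyperCube n).induce ((qslice S false : Finset (Fin n → Bool)) : Set (Fin n → Bool)))
        ≃g hyperCube m) :
    ((hyperCube (n+1)).induce (S : Set (Fin (n+1) → Bool))) ≃g hyperCube (m+1) where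
  toFun := fun v => Fin.snoc (φ ⟨Fin.init v.1, by
      have hmem : Fin.init v.1 ∈ qslice S (v.1 (Fin.last n)) := by
        simp only [qslice, Finset.mem_filter, Finset.mem_univ, true_and, Fin.snoc_init_self]
        exact v.2
      cases hb : v.1 (Fin.last n) with
      | false => rw [hb] at hmem; exact hmem
      | true => rw [hb, ← heq] at hmem; exact hmem⟩) (v.1 (Fin.last n))
  invFun := fun w => ⟨Fin.snoc (φ.symm (Fin.init w)).1 (w (Fin.last m)), by
      have hx : (φ.symm (Fin.init w)).1 ∈ qslice S false := (φ.symm (Fin.init w)).2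
      cases w (Fin.last m) with
      | false => exact (Finset.mem_filter.1 hx).2
      | true =>
        exact (Finset.mem_filter.1 ((Finset.ext_iff.1 heq _).1 hx)).2⟩
  left_inv := by
    intro v
    apply Subtype.ext
    simp only [Fin.init_snoc, Fin.snoc_last, RelIso.symm_apply_apply]
    exact Fin.snoc_init_self v.1
  right_inv := by
    intro w
    simp only [Fin.init_snoc, Fin.snoc_last, Subtype.coe_eta, RelIso.apply_symm_apply]
    exact Fin.snoc_init_self w
  map_rel_iff' := by
    intro v w
    show diffCount (Fin.snoc _ (v.1 (Fin.last n))) (Fin.snoc _ (w.1 (Fin.last n))) = 1 ↔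
      diffCount v.1 w.1 = 1
    rw [adj_snoc]
    conv_rhs => rw [← Fin.snoc_init_self v.1, ← Fin.snoc_init_self w.1]
    rw [adj_snoc]
    apply or_congr (and_congr_left' ?_) (and_congr_left' ?_)
    · exact φ.map_rel_iff
    · exact (EmbeddingLike.apply_eq_iff_eq φ).trans Subtype.mk_eq_mk

lemma DD_empty {n : ℕ} : DD n ∅ = 0 := rfl

lemma DD_zero (S : Finset (Fin 0 → Bool)) : DD 0 S = 0 := by
  unfold DD
  apply Finset.sum_eq_zero
  intro u _
  apply Finset.sum_eq_zero
  intro v _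
  rw [if_neg]
  simp [diffCount]

noncomputable def isoBase (S : Finset (Fin 0 → Bool)) (hS : S.Nonempty) :
    ((hyperCube 0).induce (S : Set (Fin 0 → Bool))) ≃g hyperCube 0 where
  toFun := fun v => v.1
  invFun := fun _ => ⟨hS.choose, hS.choose_spec⟩
  left_inv := fun v => Subtype.ext (Subsingleton.elim _ _)
  right_inv := fun x => Subsingleton.elim _ _
  map_rel_iff' := Iff.rfl

lemma combine {a b c : ℕ} {x y : ℝ} (ha : 0 < a) (hb : 0 < b) (hca : c ≤ a) (hcb : c ≤ b)
    (hx : x ≤ (a:ℝ) * Real.log a) (hy : y ≤ (b:ℝ) * Real.log b) :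
    (x + y + 2*(c:ℝ)*Real.log 2 ≤ ((a:ℝ)+(b:ℝ)) * Real.log ((a:ℝ)+(b:ℝ))) ∧
    (x + y + 2*(c:ℝ)*Real.log 2 = ((a:ℝ)+(b:ℝ)) * Real.log ((a:ℝ)+(b:ℝ)) →
      x = (a:ℝ)*Real.log a ∧ y = (b:ℝ)*Real.log b ∧ c = a ∧ a = b) := by
  have hA : (0:ℝ) < a := by exact_mod_cast ha
  have hB : (0:ℝ) < b := by exact_mod_cast hb
  have hCA : (c:ℝ) ≤ a := by exact_mod_cast hca
  have hCB : (c:ℝ) ≤ b := by exact_mod_cast hcb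
  have hlog2 : 0 < Real.log 2 := Real.log_pos one_lt_two
  rcases le_total (a:ℝ) (b:ℝ) with hab | hab
  · have hk := key_ineq hA hab
    have hca2 : (c:ℝ)*Real.log 2 ≤ (a:ℝ)*Real.log 2 :=
      mul_le_mul_of_nonneg_right hCA hlog2.le
    refine ⟨by linarith, ?_⟩
    intro he
    have h1 : x = (a:ℝ)*Real.log a := le_antisymm hx (by linarith)
    have h2 : y = (b:ℝ)*Real.log b := le_antisymm hy (by linarith)
    have h3 : (c:ℝ) * Real.log 2 = (a:ℝ) * Real.log 2 := by linarith
    have h3' : (c:ℝ) = (a:ℝ) := mul_right_cancel₀ (ne_of_gt hlog2) h3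
    have h4 : (a:ℝ) = (b:ℝ) := by
      by_contra hne
      have hlt : (a:ℝ) < b := lt_of_le_of_ne hab hne
      have := key_strict hA hlt
      linarith
    exact ⟨h1, h2, Nat.cast_injective h3', Nat.cast_injective h4⟩
  · have hk := key_ineq hB hab
    rw [add_comm (b:ℝ) (a:ℝ)] at hk
    have hcb2 : (c:ℝ)*Real.log 2 ≤ (b:ℝ)*Real.log 2 :=
      mul_le_mul_of_nonneg_right hCB hlog2.le
    refine ⟨by linarith, ?_⟩
    intro he
    have h4 : (a:ℝ) = (b:ℝ) := by
      by_contra hne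
      have hlt : (b:ℝ) < a := lt_of_le_of_ne hab (Ne.symm hne)
      have := key_strict hB hlt
      rw [add_comm (b:ℝ) (a:ℝ)] at this
      linarith
    have hk1 := key_ineq hA (le_of_eq h4)
    have hca2 : (c:ℝ)*Real.log 2 ≤ (a:ℝ)*Real.log 2 :=
      mul_le_mul_of_nonneg_right hCA hlog2.le
    have h1 : x = (a:ℝ)*Real.log a := le_antisymm hx (by linarith)
    have h2 : y = (b:ℝ)*Real.log b := le_antisymm hy (by linarith)
    have h3 : (c:ℝ) * Real.log 2 = (a:ℝ) * Real.log 2 := by linarith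
    have h3' : (c:ℝ) = (a:ℝ) := mul_right_cancel₀ (ne_of_gt hlog2) h3
    exact ⟨h1, h2, Nat.cast_injective h3', Nat.cast_injective h4⟩

lemma main_lemma : ∀ (n : ℕ) (S : Finset (Fin n → Bool)), S.Nonempty →
    ((DD n S : ℝ) * Real.log 2 ≤ (S.card : ℝ) * Real.log (S.card : ℝ)) ∧
    ((DD n S : ℝ) * Real.log 2 = (S.card : ℝ) * Real.log (S.card : ℝ) →
      ∃ m, Nonempty ((hyperCube n).induce (S : Set (Fin n → Bool)) ≃g hyperCube m)) := by
  intro n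
  induction n with
  | zero =>
    intro S hS
    have hcard : S.card = 1 := le_antisymm
      (by simpa using Finset.card_le_univ S) (Finset.Nonempty.card_pos hS)
    constructor
    · rw [DD_zero, hcard]; simp
    · intro _
      exact ⟨0, ⟨isoBase S hS⟩⟩
  | succ n ih =>
    intro S hS
    have hsplitD := DD_split S
    have hsplitC := card_split S
    by_cases h0 : qslice S false = ∅
    · -- everything in the true slice
      have hlast : ∀ v ∈ S, v (Fin.last n) = true := by
        intro v hv
        cases hb : v (Fin.last n) with
        | true => rfl
        | false =>
          exfalso
          have : Fin.init v ∈ qslice S false := by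
            simp only [qslice, Finset.mem_filter, Finset.mem_univ, true_and]
            rw [snoc_init_eq v false hb]
            exact hv
          rw [h0] at this
          exact absurd this (Finset.notMem_empty _)
      have hd : DD (n+1) S = DD n (qslice S true) := by
        rw [hsplitD, h0, DD_empty]
        simp
      have hc : S.card = (qslice S true).card := by
        rw [hsplitC, h0]
        simp
      have hne : (qslice S true).Nonempty := by
        rw [← Finset.card_pos, ← hc]
        exact Finset.card_pos.2 hS
      obtain ⟨ineq1, eq1⟩ := ih (qslice S true) hne
      constructor
      · rw [hd, hc]; exact ineq1
      · intro heq
        rw [hd, hc] at heq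
        obtain ⟨m, ⟨φ⟩⟩ := eq1 heq
        exact ⟨m, ⟨(isoDegenerate S true hlast).trans φ⟩⟩
    · by_cases h1 : qslice S true = ∅
      · -- everything in the false slice
        have hlast : ∀ v ∈ S, v (Fin.last n) = false := by
          intro v hv
          cases hb : v (Fin.last n) with
          | false => rfl
          | true =>
            exfalso
            have : Fin.init v ∈ qslice S true := by
              simp only [qslice, Finset.mem_filter, Finset.mem_univ, true_and]
              rw [snoc_init_eq v true hb]
              exact hv
            rw [h1] at this
            exact absurd this (Finset.notMem_empty _)
        have hd : DD (n+1) S = DD n (qslice S false) := by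
          rw [hsplitD, h1, DD_empty]
          simp
        have hc : S.card = (qslice S false).card := by
          rw [hsplitC, h1]
          simp
        have hne : (qslice S false).Nonempty := by
          rw [← Finset.card_pos, ← hc]
          exact Finset.card_pos.2 hS
        obtain ⟨ineq1, eq1⟩ := ih (qslice S false) hne
        constructor
        · rw [hd, hc]; exact ineq1
        · intro heq
          rw [hd, hc] at heq
          obtain ⟨m, ⟨φ⟩⟩ := eq1 heq
          exact ⟨m, ⟨(isoDegenerate S false hlast).trans φ⟩⟩
      · -- both slices nonempty
        have hne0 : (qslice S false).Nonempty := Finset.nonempty_of_ne_empty h0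
        have hne1 : (qslice S true).Nonempty := Finset.nonempty_of_ne_empty h1
        obtain ⟨ineq0, eq0⟩ := ih (qslice S false) hne0
        obtain ⟨ineq1, eq1⟩ := ih (qslice S true) hne1
        have hca : (qslice S false ∩ qslice S true).card ≤ (qslice S false).card :=
          Finset.card_le_card (Finset.inter_subset_left)
        have hcb : (qslice S false ∩ qslice S true).card ≤ (qslice S true).card :=
          Finset.card_le_card (Finset.inter_subset_right)
        obtain ⟨cineq, ceq⟩ := combine (Finset.card_pos.2 hne0) (Finset.card_pos.2 hne1)
          hca hcb ineq0 ineq1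
        have hDcast : (DD (n+1) S : ℝ) * Real.log 2
            = (DD n (qslice S false) : ℝ) * Real.log 2
              + (DD n (qslice S true) : ℝ) * Real.log 2
              + 2 * ((qslice S false ∩ qslice S true).card : ℝ) * Real.log 2 := by
          rw [hsplitD]
          push_cast
          ring
        have hCcast : (S.card : ℝ) = ((qslice S false).card : ℝ) + ((qslice S true).card : ℝ) := by
          rw [hsplitC]
          push_cast
          ring
        constructor
        · rw [hDcast, hCcast]
          exact cineq
        · intro heq
          rw [hDcast, hCcast] at heq
          obtain ⟨e0, e1, ec, eab⟩ := ceq heq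
          -- slices are equal
          have hinter : qslice S false ∩ qslice S true = qslice S false :=
            Finset.eq_of_subset_of_card_le Finset.inter_subset_left (le_of_eq ec.symm)
          have hsub : qslice S false ⊆ qslice S true := by
            rw [← hinter]
            exact Finset.inter_subset_right
          have heqslice : qslice S false = qslice S true :=
            Finset.eq_of_subset_of_card_le hsub (le_of_eq eab.symm)
          obtain ⟨m, ⟨φ⟩⟩ := eq0 e0
          exact ⟨m + 1, ⟨isoDouble S heqslice φ⟩⟩

lemma hyperCube_degree {m : ℕ} (u : Fin m → Bool) : (hyperCube m).degree u = m := by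
  have hinj : Function.Injective (fun i : Fin m => Function.update u i (!(u i))) := by
    intro i j h
    by_contra hne
    have h1 := congrFun h i
    simp only [] at h1
    rw [Function.update_self, Function.update_of_ne hne] at h1
    cases u i <;> simp_all
  have himg : (hyperCube m).neighborFinset u
      = Finset.univ.image (fun i : Fin m => Function.update u i (!(u i))) := by
    ext v
    rw [SimpleGraph.mem_neighborFinset, Finset.mem_image]
    constructor
    · intro hadj
      have h1 : (Finset.univ.filter fun i => u i ≠ v i).card = 1 := hadj
      obtain ⟨i, hi⟩ := Finset.card_eq_one.1 h1
      refine ⟨i, Finset.mem_univ i, ?_⟩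
      funext j
      by_cases hj : j = i
      · subst hj
        have hji : j ∈ Finset.univ.filter fun i => u i ≠ v i := by
          rw [hi]; exact Finset.mem_singleton_self j
        have hne := (Finset.mem_filter.1 hji).2
        rw [Function.update_self]
        revert hne
        cases u j <;> cases v j <;> simp
      · rw [Function.update_of_ne hj]
        by_contra hne
        have hji : j ∈ Finset.univ.filter fun i => u i ≠ v i :=
          Finset.mem_filter.2 ⟨Finset.mem_univ j, hne⟩
        rw [hi, Finset.mem_singleton] at hji
        exact hj hji
    · rintro ⟨i, -, rfl⟩
      show diffCount u (Function.update u i (!(u i))) = 1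
      unfold diffCount
      rw [Finset.card_eq_one]
      refine ⟨i, ?_⟩
      ext j
      simp only [Finset.mem_filter, Finset.mem_univ, true_and, Finset.mem_singleton]
      by_cases hj : j = i
      · subst hj
        simp only [Function.update_self, iff_true]
        cases u j <;> simp
      · simp only [Function.update_of_ne hj, hj, iff_false]
        simp
  rw [SimpleGraph.degree, himg, Finset.card_image_of_injective _ hinj, Finset.card_univ,
    Fintype.card_fin]

lemma hyperCube_edges (m : ℕ) : 2 * (hyperCube m).edgeFinset.card = m * 2^m := by
  rw [← SimpleGraph.sum_degrees_eq_twice_card_edges]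
  have : ∀ v : Fin m → Bool, (hyperCube m).degree v = m := hyperCube_degree
  rw [Finset.sum_congr rfl (fun v _ => this v), Finset.sum_const, Finset.card_univ]
  simp [mul_comm]

lemma iso_of_count_eq {V : Type*} [Fintype V] [DecidableEq V]
    (G : SimpleGraph V) [DecidableRel G.Adj] {n : ℕ}
    (f : G →g hyperCube n) (hf : Function.Injective f)
    (hcount : ((Finset.univ ×ˢ Finset.univ).filter fun p : V × V => G.Adj p.1 p.2).card
      = DD n (Finset.univ.image ⇑f)) :
    Nonempty (G ≃g (hyperCube n).induce
      ((Finset.univ.image ⇑f : Finset (Fin n → Bool)) : Set (Fin n → Bool))) := by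
  classical
  set Sf := Finset.univ.image ⇑f with hSf
  set s := (Finset.univ ×ˢ Finset.univ).filter fun p : V × V => G.Adj p.1 p.2 with hs
  set t := (Sf ×ˢ Sf).filter fun p : _ × _ => diffCount p.1 p.2 = 1 with ht
  have hDDt : DD n Sf = t.card := by
    rw [ht, Finset.card_filter, Finset.sum_product]; rfl
  have hmaps : ∀ p ∈ s, (f p.1, f p.2) ∈ t := by
    intro p hp
    rw [hs, Finset.mem_filter] at hp
    rw [ht, Finset.mem_filter]
    refine ⟨Finset.mem_product.2 ⟨?_, ?_⟩, f.map_adj hp.2⟩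
    · exact Finset.mem_image_of_mem _ (Finset.mem_univ _)
    · exact Finset.mem_image_of_mem _ (Finset.mem_univ _)
  have hinj : Set.InjOn (fun p : V × V => ((f p.1 : Fin n → Bool), (f p.2 : Fin n → Bool))) ↑s := by
    intro p _ q _ h
    have h1 := congrArg Prod.fst h
    have h2 := congrArg Prod.snd h
    simp only [] at h1 h2
    exact Prod.ext_iff.2 ⟨hf h1, hf h2⟩
  have himg : s.image (fun p : V × V => ((f p.1 : Fin n → Bool), (f p.2 : Fin n → Bool))) = t := by
    apply Finset.eq_of_subset_of_card_le
    · intro q hq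
      obtain ⟨p, hp, rfl⟩ := Finset.mem_image.1 hq
      exact hmaps p hp
    · rw [Finset.card_image_of_injOn hinj, ← hDDt, ← hcount]
  have hreflect : ∀ u v : V, (hyperCube n).Adj (f u) (f v) → G.Adj u v := by
    intro u v hadj
    have hmem : ((f u : Fin n → Bool), (f v : Fin n → Bool)) ∈ t := by
      rw [ht, Finset.mem_filter]
      exact ⟨Finset.mem_product.2 ⟨Finset.mem_image_of_mem _ (Finset.mem_univ _),
        Finset.mem_image_of_mem _ (Finset.mem_univ _)⟩, hadj⟩
    rw [← himg] at hmem
    obtain ⟨p, hp, hpe⟩ := Finset.mem_image.1 hmem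
    have h1 : f p.1 = f u := congrArg Prod.fst hpe
    have h2 : f p.2 = f v := congrArg Prod.snd hpe
    have e1 := hf h1
    have e2 := hf h2
    rw [hs, Finset.mem_filter] at hp
    rw [← e1, ← e2]
    exact hp.2
  have hmem2 : ∀ u : V, (f u : Fin n → Bool) ∈ (Sf : Set (Fin n → Bool)) := by
    intro u
    exact Finset.mem_coe.2 (Finset.mem_image_of_mem _ (Finset.mem_univ _))
  have hbij : Function.Bijective
      (fun u : V => (⟨f u, hmem2 u⟩ : ((Sf : Set (Fin n → Bool)) : Type _))) := by
    rw [Fintype.bijective_iff_injective_and_card]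
    constructor
    · intro u v h
      exact hf (congrArg Subtype.val h)
    · simp [Finset.card_image_of_injective _ hf]
      rw [hSf, Finset.card_image_of_injective _ hf, Finset.card_univ]
  exact ⟨{ toEquiv := Equiv.ofBijective _ hbij,
           map_rel_iff' := by
             intro u v
             constructor
             · exact hreflect u v
             · exact fun h => f.map_adj h }⟩

lemma iso_edge_count {V : Type*} [Fintype V] [DecidableEq V]
    (G : SimpleGraph V) [DecidableRel G.Adj] {m : ℕ} (ψ : G ≃g hyperCube m) :
    (G.edgeFinset.card : ℝ)
      = (1 / 2) * (Fintype.card V) * Real.logb 2 (Fintype.card V) := by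
  classical
  have hN : Fintype.card V = 2^m := by
    rw [Fintype.card_congr ψ.toEquiv]
    simp
  have he : G.edgeFinset.card = (hyperCube m).edgeFinset.card := ψ.card_edgeFinset_eq
  have h2 := hyperCube_edges m
  have hcast : 2 * ((hyperCube m).edgeFinset.card : ℝ) = m * 2^m := by exact_mod_cast h2
  have hl : Real.logb 2 ((2:ℝ)^m) = m := by
    rw [Real.logb_pow]
    simp
  rw [he, hN]
  push_cast
  rw [hl]
  linarith

/-- Density Lemma: a (nonempty) subgraph G of a hypercube satisfies
|E(G)| ≤ (1/2)|V(G)| log₂ |V(G)|, with equality iff G is a hypercube. -/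
theorem density_lemma {V : Type*} [Fintype V] [DecidableEq V] [Nonempty V]
    (G : SimpleGraph V) [DecidableRel G.Adj] (n : ℕ)
    (f : G →g hyperCube n) (hf : Function.Injective f) :
    ((G.edgeFinset.card : ℝ) ≤
        (1 / 2) * (Fintype.card V) * Real.logb 2 (Fintype.card V)) ∧
      ((G.edgeFinset.card : ℝ) =
          (1 / 2) * (Fintype.card V) * Real.logb 2 (Fintype.card V) ↔
        ∃ m : ℕ, Nonempty (G ≃g hyperCube m)) := by
  classical
  set N := Fintype.card V with hN
  set Sf := Finset.univ.image ⇑f with hSf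
  have hcard : Sf.card = N := by
    rw [hSf, Finset.card_image_of_injective _ hf, Finset.card_univ]
  have hSne : Sf.Nonempty :=
    ⟨f (Classical.arbitrary V), Finset.mem_image_of_mem _ (Finset.mem_univ _)⟩
  set s := (Finset.univ ×ˢ Finset.univ).filter fun p : V × V => G.Adj p.1 p.2 with hs
  have hP : 2 * G.edgeFinset.card = s.card := by
    rw [SimpleGraph.two_mul_card_edgeFinset, hs, Finset.univ_product_univ]
  have hDDt : DD n Sf = ((Sf ×ˢ Sf).filter fun p : _ × _ => diffCount p.1 p.2 = 1).card := by
    rw [Finset.card_filter, Finset.sum_product]; rfl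
  have hmaps : ∀ p ∈ s, ((f p.1 : Fin n → Bool), (f p.2 : Fin n → Bool))
      ∈ (Sf ×ˢ Sf).filter fun p : _ × _ => diffCount p.1 p.2 = 1 := by
    intro p hp
    rw [hs, Finset.mem_filter] at hp
    rw [Finset.mem_filter]
    exact ⟨Finset.mem_product.2 ⟨Finset.mem_image_of_mem _ (Finset.mem_univ _),
      Finset.mem_image_of_mem _ (Finset.mem_univ _)⟩, f.map_adj hp.2⟩
  have hinj : Set.InjOn (fun p : V × V => ((f p.1 : Fin n → Bool), (f p.2 : Fin n → Bool))) ↑s := by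
    intro p _ q _ h
    have h1 := congrArg Prod.fst h
    have h2 := congrArg Prod.snd h
    simp only [] at h1 h2
    exact Prod.ext_iff.2 ⟨hf h1, hf h2⟩
  have hle : s.card ≤ DD n Sf := by
    rw [hDDt]
    exact Finset.card_le_card_of_injOn _ hmaps hinj
  obtain ⟨mainineq, maineq⟩ := main_lemma n Sf hSne
  rw [hcard] at mainineq maineq
  have hlog2 : (0:ℝ) < Real.log 2 := Real.log_pos one_lt_two
  have hN1 : 0 < N := Fintype.card_pos
  have h2le : (2 * G.edgeFinset.card : ℕ) ≤ DD n Sf := hP ▸ hle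
  have h2ler : ((2 * G.edgeFinset.card : ℕ) : ℝ) * Real.log 2 ≤ (N:ℝ) * Real.log N := by
    calc ((2 * G.edgeFinset.card : ℕ) : ℝ) * Real.log 2
        ≤ (DD n Sf : ℝ) * Real.log 2 := by
          apply mul_le_mul_of_nonneg_right _ hlog2.le
          exact_mod_cast h2le
      _ ≤ (N:ℝ) * Real.log N := mainineq
  have hhalf : (1/2:ℝ) * N * Real.logb 2 N = ((N:ℝ) * Real.log N) / (2 * Real.log 2) := by
    rw [Real.logb]
    ring
  constructor
  · rw [hhalf, le_div_iff₀ (by positivity)]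
    push_cast at h2ler ⊢
    linarith
  constructor
  · intro heq
    rw [hhalf] at heq
    have heq2 : ((2 * G.edgeFinset.card : ℕ) : ℝ) * Real.log 2 = (N:ℝ) * Real.log N := by
      have h' : (G.edgeFinset.card : ℝ) * (2 * Real.log 2) = (N:ℝ) * Real.log N := by
        rw [heq, div_mul_cancel₀]
        positivity
      push_cast
      linarith
    have hmul : ((2 * G.edgeFinset.card : ℕ) : ℝ) * Real.log 2 ≤ (DD n Sf : ℝ) * Real.log 2 := by
      apply mul_le_mul_of_nonneg_right _ hlog2.le
      exact_mod_cast h2le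
    have hDDeq : (DD n Sf : ℝ) * Real.log 2 = (N:ℝ) * Real.log N :=
      le_antisymm mainineq (by linarith)
    have hDDe2 : ((2 * G.edgeFinset.card : ℕ) : ℝ) = (DD n Sf : ℝ) := by
      have := heq2.trans hDDeq.symm
      exact mul_right_cancel₀ (ne_of_gt hlog2) this
    have hcount : s.card = DD n Sf := by
      rw [← hP]
      exact_mod_cast hDDe2
    obtain ⟨m, ⟨φ⟩⟩ := maineq hDDeq
    obtain ⟨ι⟩ := iso_of_count_eq G f hf hcount
    exact ⟨m, ⟨ι.trans φ⟩⟩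
  · rintro ⟨m, ⟨ψ⟩⟩
    exact iso_edge_count G ψ
end

section
/- The hypercube density of the family of Fibonacci cubes {Γ_n} equals (5−√5)/(5 log₂ φ); that is, (2|E(Γ_n)|)/(|V(Γ_n)|·log₂|V(Γ_n)|) converges to (5−√5)/(5 log₂ φ) as n → ∞, where φ = (1+√5)/2. -/
open Finset

/-- Fibonacci strings: binary strings with no two consecutive 1's. -/
def FibPred (n : ℕ) (v : Fin n → Bool) : Prop :=
  ∀ i j : Fin n, (j : ℕ) = (i : ℕ) + 1 → ¬(v i = true ∧ v j = true)

instance (n : ℕ) : DecidablePred (FibPred n) := fun v => by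
  unfold FibPred; infer_instance

/-- Vertices of the Fibonacci cube: Fibonacci strings of length n. -/
def FibV (n : ℕ) := {v : Fin n → Bool // FibPred n v}

instance (n : ℕ) : Fintype (FibV n) := Subtype.fintype _
instance (n : ℕ) : DecidableEq (FibV n) := Subtype.instDecidableEq

/-- The Fibonacci cube Γ_n: Fibonacci strings adjacent iff they differ in exactly one position. -/
def fibCube (n : ℕ) : SimpleGraph (FibV n) where
  Adj u v := diffCount u.1 v.1 = 1
  symm := by
    constructor
    intro u v h
    have he : (Finset.univ.filter fun i => v.1 i ≠ u.1 i)
        = (Finset.univ.filter fun i => u.1 i ≠ v.1 i) := by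
      apply Finset.filter_congr; intro i _; exact ne_comm
    simpa [diffCount, he] using h
  loopless := by constructor; intro u h; simp [diffCount] at h

instance (n : ℕ) : DecidableRel (fibCube n).Adj := fun u v => Nat.decEq _ _

-- diffCount lemmas
lemma diffCount_cons {n : ℕ} (a b : Bool) (u v : Fin n → Bool) :
    diffCount (Fin.cons a u) (Fin.cons b v) = (if a ≠ b then 1 else 0) + diffCount u v := by
  unfold diffCount
  rw [Finset.card_filter, Finset.card_filter, Fin.sum_univ_succ]
  simp

lemma diffCount_succ {n : ℕ} (u v : Fin (n+1) → Bool) :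
    diffCount u v = (if u 0 ≠ v 0 then 1 else 0) + diffCount (Fin.tail u) (Fin.tail v) := by
  have := diffCount_cons (u 0) (v 0) (Fin.tail u) (Fin.tail v)
  rwa [Fin.cons_self_tail, Fin.cons_self_tail] at this

lemma diffCount_eq_zero_iff {n : ℕ} (u v : Fin n → Bool) :
    diffCount u v = 0 ↔ u = v := by
  unfold diffCount
  rw [Finset.card_eq_zero, Finset.filter_eq_empty_iff]
  constructor
  · intro h; funext i; have := h (Finset.mem_univ i); simpa using this
  · intro h i _; simp [h]

-- FibPred lemmas
lemma fibPred_tail {n : ℕ} {v : Fin (n+1) → Bool} (h : FibPred (n+1) v) :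
    FibPred n (Fin.tail v) := by
  intro i j hij
  exact h i.succ j.succ (by simpa using hij)

lemma fibPred_cons_false_iff {n : ℕ} (w : Fin n → Bool) :
    FibPred (n+1) (Fin.cons false w) ↔ FibPred n w := by
  constructor
  · intro h
    have := fibPred_tail h
    rwa [Fin.tail_cons] at this
  · intro h i j hij
    refine Fin.cases ?_ ?_ i hij
    · intro _; simp
    · intro i' hij'
      refine Fin.cases ?_ ?_ j hij'
      · intro hc; simp at hc
      · intro j' hc
        have : (j' : ℕ) = (i' : ℕ) + 1 := by simpa using hc
        simpa using h i' j' this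

lemma fibPred_head {n : ℕ} {v : Fin (n+2) → Bool} (h : FibPred (n+2) v) :
    ¬(v 0 = true ∧ v 1 = true) := by
  exact h 0 1 (by simp [Fin.val_one])

lemma fibPred_one (v : Fin 1 → Bool) : FibPred 1 v := by
  intro i j hij
  exact absurd hij (by omega)

lemma fibPred_cons {n : ℕ} (b : Bool) (w : Fin (n+1) → Bool) (hw : FibPred (n+1) w)
    (hb : ¬(b = true ∧ w 0 = true)) : FibPred (n+2) (Fin.cons b w) := by
  intro i j hij
  refine Fin.cases ?_ ?_ i hij
  · intro hj
    have hj1 : j = 1 := by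
      apply Fin.ext; simpa [Fin.val_one] using hj
    subst hj1
    have h1 : (1 : Fin (n+2)) = Fin.succ 0 := by apply Fin.ext; simp [Fin.val_one]
    rw [h1]
    simpa using hb
  · intro i' hij'
    refine Fin.cases ?_ ?_ j hij'
    · intro hc; simp at hc
    · intro j' hc
      have : (j' : ℕ) = (i' : ℕ) + 1 := by simpa using hc
      simpa using hw i' j' this

-- constructors
def tailV {n : ℕ} (v : FibV (n+1)) : FibV n := ⟨Fin.tail v.1, fibPred_tail v.2⟩

def consF {n : ℕ} (w : FibV n) : FibV (n+1) :=
  ⟨Fin.cons false w.1, (fibPred_cons_false_iff w.1).2 w.2⟩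

def consT {n : ℕ} (w : FibV n) : FibV (n+2) :=
  ⟨Fin.cons true (Fin.cons false w.1),
    fibPred_cons true _ ((fibPred_cons_false_iff w.1).2 w.2) (by simp)⟩

lemma tailV_consF {n : ℕ} (w : FibV n) : tailV (consF w) = w := by
  apply Subtype.ext; simp [tailV, consF, Fin.tail_cons]

lemma consF_tailV {n : ℕ} (v : FibV (n+1)) (h : v.1 0 = false) : consF (tailV v) = v := by
  apply Subtype.ext
  show Fin.cons false (Fin.tail v.1) = v.1
  rw [← h, Fin.cons_self_tail]

lemma snd_false {n : ℕ} (v : FibV (n+2)) (h : v.1 0 = true) : v.1 1 = false := by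
  have := fibPred_head v.2
  rw [h] at this
  simpa using this

lemma tailV_tailV_consT {n : ℕ} (w : FibV n) : tailV (tailV (consT w)) = w := by
  apply Subtype.ext; simp [tailV, consT, Fin.tail_cons]

lemma consT_tailV_tailV {n : ℕ} (v : FibV (n+2)) (h : v.1 0 = true) :
    consT (tailV (tailV v)) = v := by
  apply Subtype.ext
  show Fin.cons true (Fin.cons false (Fin.tail (Fin.tail v.1))) = v.1
  have hs : (Fin.succ 0 : Fin (n+2)) = 1 := by apply Fin.ext; simp [Fin.val_one]
  have h2 : Fin.tail v.1 0 = false := by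
    show v.1 (Fin.succ 0) = false
    rw [hs]; exact snd_false v h
  conv_lhs => rw [← h2, Fin.cons_self_tail]
  rw [← h, Fin.cons_self_tail]

lemma diffCount_tail_eq {n : ℕ} {u v : Fin (n+1) → Bool} (h : u 0 = v 0) :
    diffCount u v = diffCount (Fin.tail u) (Fin.tail v) := by
  rw [diffCount_succ]; simp [h]

lemma cardV_rec (n : ℕ) :
    Fintype.card (FibV (n+2)) = Fintype.card (FibV (n+1)) + Fintype.card (FibV n) := by
  rw [← Finset.card_univ (α := FibV (n+2)),
    ← Finset.card_filter_add_card_filter_not (p := fun v : FibV (n+2) => v.1 0 = false)]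
  congr 1
  · rw [← Finset.card_univ (α := FibV (n+1))]
    apply Finset.card_nbij' tailV consF
    · intro a _; exact Finset.mem_univ _
    · intro w _
      simp only [Finset.mem_coe, Finset.mem_filter, Finset.mem_univ, true_and]
      show (Fin.cons false w.1 : Fin (n+2) → Bool) 0 = false
      exact Fin.cons_zero _ _
    · intro v hv
      simp only [Finset.mem_coe, Finset.mem_filter, Finset.mem_univ, true_and] at hv
      exact consF_tailV v hv
    · intro w _; exact tailV_consF w
  · rw [← Finset.card_univ (α := FibV n)]
    apply Finset.card_nbij' (fun v => tailV (tailV v)) consT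
    · intro a _; exact Finset.mem_univ _
    · intro w _
      simp only [Finset.mem_coe, Finset.mem_filter, Finset.mem_univ, true_and]
      show ¬((Fin.cons true (Fin.cons false w.1 : Fin (n+1) → Bool) : Fin (n+2) → Bool) 0 = false)
      simp
    · intro v hv
      simp only [Finset.mem_coe, Finset.mem_filter, Finset.mem_univ, true_and] at hv
      exact consT_tailV_tailV v (by simpa using hv)
    · intro w _; exact tailV_tailV_consT w

def fibPairs (n : ℕ) : Finset (FibV n × FibV n) :=
  Finset.univ.filter fun p => diffCount p.1.1 p.2.1 = 1

lemma diffCount_comm {n : ℕ} (u v : Fin n → Bool) : diffCount u v = diffCount v u := by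
  unfold diffCount
  congr 1
  apply Finset.filter_congr; intro i _; exact ne_comm

lemma tail_zero {n : ℕ} (v : Fin (n+2) → Bool) : Fin.tail v 0 = v 1 := by
  show v (Fin.succ 0) = v 1
  have h : (Fin.succ 0 : Fin (n+2)) = 1 := by apply Fin.ext; simp [Fin.val_one]
  rw [h]

lemma diff_tt {n : ℕ} (v w : FibV (n+2)) (hv : v.1 0 = true) (hw : w.1 0 = true) :
    diffCount v.1 w.1 = diffCount (tailV (tailV v)).1 (tailV (tailV w)).1 := by
  rw [diffCount_tail_eq (hv.trans hw.symm)]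
  exact diffCount_tail_eq (by rw [tail_zero, tail_zero, snd_false v hv, snd_false w hw])

lemma cross_tail_eq {n : ℕ} {v w : FibV (n+1)} (hd : diffCount v.1 w.1 = 1)
    (hne : v.1 0 ≠ w.1 0) : Fin.tail v.1 = Fin.tail w.1 := by
  rw [diffCount_succ, if_pos hne] at hd
  exact (diffCount_eq_zero_iff _ _).1 (by omega)

lemma cross_recover {n : ℕ} {v w : FibV (n+2)} (hd : diffCount v.1 w.1 = 1)
    (hv : v.1 0 = false) (hw : w.1 0 = true) :
    consF (consF (tailV (tailV w))) = v ∧ consT (tailV (tailV w)) = w := by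
  have hne : v.1 0 ≠ w.1 0 := by rw [hv, hw]; simp
  have hteq : tailV v = tailV w := Subtype.ext (cross_tail_eq hd hne)
  constructor
  · have h1 : consF (tailV (tailV w)) = tailV w := by
      apply consF_tailV
      show Fin.tail w.1 0 = false
      rw [tail_zero, snd_false w hw]
    rw [h1, ← hteq]
    exact consF_tailV v hv
  · exact consT_tailV_tailV w hw

lemma head_true_of_ne {v w : Bool} (h : ¬ v = w) (hv : v = false) : w = true := by
  subst hv; cases w <;> simp_all

lemma head_false_of_ne {v w : Bool} (h : ¬ v = w) (hv : v = true) : w = false := by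
  subst hv; cases w <;> simp_all

lemma fibPairs_rec (n : ℕ) :
    (fibPairs (n+2)).card
      = (fibPairs (n+1)).card + (fibPairs n).card + 2 * Fintype.card (FibV n) := by
  have hsplit := Finset.card_filter_add_card_filter_not
    (s := fibPairs (n+2)) (p := fun p => p.1.1 0 = p.2.1 0)
  set S := (fibPairs (n+2)).filter (fun p => p.1.1 0 = p.2.1 0) with hS
  set X := (fibPairs (n+2)).filter (fun p => ¬ p.1.1 0 = p.2.1 0) with hX
  have hsplitS := Finset.card_filter_add_card_filter_not
    (s := S) (p := fun p => p.1.1 0 = false)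
  have hsplitX := Finset.card_filter_add_card_filter_not
    (s := X) (p := fun p => p.1.1 0 = false)
  -- same heads, both false : fibPairs (n+1)
  have hSF : (S.filter (fun p => p.1.1 0 = false)).card = (fibPairs (n+1)).card := by
    apply Finset.card_nbij' (fun p => (tailV p.1, tailV p.2))
      (fun q => (consF q.1, consF q.2))
    · intro p hp
      simp only [hS, fibPairs, Finset.mem_coe, Finset.mem_filter, Finset.mem_univ, true_and] at hp ⊢
      obtain ⟨⟨hd, he⟩, _⟩ := hp
      show diffCount (Fin.tail p.1.1) (Fin.tail p.2.1) = 1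
      rwa [← diffCount_tail_eq he]
    · intro q hq
      simp only [fibPairs, Finset.mem_coe, Finset.mem_filter, Finset.mem_univ, true_and] at hq
      simp only [hS, fibPairs, Finset.mem_coe, Finset.mem_filter, Finset.mem_univ, true_and]
      refine ⟨⟨?_, ?_⟩, ?_⟩
      · show diffCount (Fin.cons false q.1.1) (Fin.cons false q.2.1) = 1
        rw [diffCount_cons]; simpa using hq
      · show (Fin.cons false q.1.1 : Fin (n+2) → Bool) 0
            = (Fin.cons false q.2.1 : Fin (n+2) → Bool) 0
        simp
      · show (Fin.cons false q.1.1 : Fin (n+2) → Bool) 0 = false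
        simp
    · intro p hp
      simp only [hS, fibPairs, Finset.mem_coe, Finset.mem_filter, Finset.mem_univ, true_and] at hp
      obtain ⟨⟨_, he⟩, hf⟩ := hp
      rw [Prod.ext_iff]
      exact ⟨consF_tailV _ hf, consF_tailV _ (he ▸ hf)⟩
    · intro q _
      rw [Prod.ext_iff]
      exact ⟨tailV_consF _, tailV_consF _⟩
  -- same heads, both true : fibPairs n
  have hST : (S.filter (fun p => ¬ p.1.1 0 = false)).card = (fibPairs n).card := by
    apply Finset.card_nbij' (fun p => (tailV (tailV p.1), tailV (tailV p.2)))
      (fun q => (consT q.1, consT q.2))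
    · intro p hp
      simp only [hS, fibPairs, Finset.mem_coe, Finset.mem_filter, Finset.mem_univ, true_and] at hp ⊢
      obtain ⟨⟨hd, he⟩, ht⟩ := hp
      rw [← diff_tt p.1 p.2 (by simpa using ht) (by rw [← he]; simpa using ht)]
      exact hd
    · intro q hq
      simp only [fibPairs, Finset.mem_coe, Finset.mem_filter, Finset.mem_univ, true_and] at hq
      simp only [hS, fibPairs, Finset.mem_coe, Finset.mem_filter, Finset.mem_univ, true_and]
      refine ⟨⟨?_, ?_⟩, ?_⟩
      · show diffCount (Fin.cons true (Fin.cons false q.1.1))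
            (Fin.cons true (Fin.cons false q.2.1)) = 1
        rw [diffCount_cons, diffCount_cons]; simpa using hq
      · show (Fin.cons true (Fin.cons false q.1.1 : Fin (n+1) → Bool) : Fin (n+2) → Bool) 0
            = (Fin.cons true (Fin.cons false q.2.1 : Fin (n+1) → Bool) : Fin (n+2) → Bool) 0
        simp
      · show ¬ ((Fin.cons true (Fin.cons false q.1.1 : Fin (n+1) → Bool) : Fin (n+2) → Bool) 0
            = false)
        simp
    · intro p hp
      simp only [hS, fibPairs, Finset.mem_coe, Finset.mem_filter, Finset.mem_univ, true_and] at hp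
      obtain ⟨⟨_, he⟩, ht⟩ := hp
      rw [Prod.ext_iff]
      exact ⟨consT_tailV_tailV _ (by simpa using ht),
        consT_tailV_tailV _ (by rw [← he]; simpa using ht)⟩
    · intro q _
      rw [Prod.ext_iff]
      exact ⟨tailV_tailV_consT _, tailV_tailV_consT _⟩
  -- cross, first head false
  have hXF : (X.filter (fun p => p.1.1 0 = false)).card = Fintype.card (FibV n) := by
    rw [← Finset.card_univ (α := FibV n)]
    apply Finset.card_nbij' (fun p => tailV (tailV p.2))
      (fun x => (consF (consF x), consT x))
    · intro p _; exact Finset.mem_univ _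
    · intro x _
      simp only [hX, fibPairs, Finset.mem_coe, Finset.mem_filter, Finset.mem_univ, true_and]
      refine ⟨⟨?_, ?_⟩, ?_⟩
      · show diffCount (Fin.cons false (Fin.cons false x.1))
            (Fin.cons true (Fin.cons false x.1)) = 1
        rw [diffCount_cons, diffCount_cons, (diffCount_eq_zero_iff _ _).2 rfl]
        simp
      · show ¬ ((Fin.cons false (Fin.cons false x.1 : Fin (n+1) → Bool) : Fin (n+2) → Bool) 0
            = (Fin.cons true (Fin.cons false x.1 : Fin (n+1) → Bool) : Fin (n+2) → Bool) 0)
        simp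
      · show (Fin.cons false (Fin.cons false x.1 : Fin (n+1) → Bool) : Fin (n+2) → Bool) 0
            = false
        simp
    · intro p hp
      simp only [hX, fibPairs, Finset.mem_coe, Finset.mem_filter, Finset.mem_univ, true_and] at hp
      obtain ⟨⟨hd, hne⟩, hf⟩ := hp
      have hw : p.2.1 0 = true := head_true_of_ne hne hf
      obtain ⟨h1, h2⟩ := cross_recover hd hf hw
      rw [Prod.ext_iff]
      exact ⟨h1, h2⟩
    · intro x _
      exact tailV_tailV_consT x
  -- cross, first head true
  have hXT : (X.filter (fun p => ¬ p.1.1 0 = false)).card = Fintype.card (FibV n) := by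
    rw [← Finset.card_univ (α := FibV n)]
    apply Finset.card_nbij' (fun p => tailV (tailV p.1))
      (fun x => (consT x, consF (consF x)))
    · intro p _; exact Finset.mem_univ _
    · intro x _
      simp only [hX, fibPairs, Finset.mem_coe, Finset.mem_filter, Finset.mem_univ, true_and]
      refine ⟨⟨?_, ?_⟩, ?_⟩
      · show diffCount (Fin.cons true (Fin.cons false x.1))
            (Fin.cons false (Fin.cons false x.1)) = 1
        rw [diffCount_cons, diffCount_cons, (diffCount_eq_zero_iff _ _).2 rfl]
        simp
      · show ¬ ((Fin.cons true (Fin.cons false x.1 : Fin (n+1) → Bool) : Fin (n+2) → Bool) 0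
            = (Fin.cons false (Fin.cons false x.1 : Fin (n+1) → Bool) : Fin (n+2) → Bool) 0)
        simp
      · show ¬ ((Fin.cons true (Fin.cons false x.1 : Fin (n+1) → Bool) : Fin (n+2) → Bool) 0
            = false)
        simp
    · intro p hp
      simp only [hX, fibPairs, Finset.mem_coe, Finset.mem_filter, Finset.mem_univ, true_and] at hp
      obtain ⟨⟨hd, hne⟩, ht⟩ := hp
      have hv : p.1.1 0 = true := by simpa using ht
      have hw : p.2.1 0 = false := head_false_of_ne hne hv
      have hd' : diffCount p.2.1 p.1.1 = 1 := by rwa [diffCount_comm]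
      obtain ⟨h1, h2⟩ := cross_recover hd' hw hv
      rw [Prod.ext_iff]
      exact ⟨h2, h1⟩
    · intro x _
      exact tailV_tailV_consT x
  omega

lemma fibPairs_card_eq (n : ℕ) :
    (fibPairs n).card = 2 * (fibCube n).edgeFinset.card := by
  rw [← SimpleGraph.sum_degrees_eq_twice_card_edges]
  unfold fibPairs
  rw [Finset.card_filter]
  rw [Fintype.sum_prod_type]
  congr 1
  funext u
  rw [SimpleGraph.degree, SimpleGraph.neighborFinset_eq_filter, Finset.card_filter]
  rfl

lemma cardV_closed (n : ℕ) : Fintype.card (FibV n) = Nat.fib (n+2) := by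
  induction n using Nat.twoStepInduction with
  | zero => decide
  | one => decide
  | more n ih1 ih2 =>
    rw [cardV_rec, ih1, ih2]
    rw [Nat.fib_add_two (n := n+2), show n+2+1 = n+1+2 from rfl]
    omega

lemma fibPairs_closed (n : ℕ) :
    5 * (fibPairs n).card = 2 * (n * Nat.fib (n+1) + 2*(n+1) * Nat.fib n) := by
  induction n using Nat.twoStepInduction with
  | zero => decide
  | one => decide
  | more n ih1 ih2 =>
    rw [fibPairs_rec, cardV_closed]
    have e1 : Nat.fib (n+3) = Nat.fib (n+1) + Nat.fib (n+2) := Nat.fib_add_two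
    have e2 : Nat.fib (n+2) = Nat.fib n + Nat.fib (n+1) := Nat.fib_add_two
    rw [Nat.mul_add, Nat.mul_add, ih1, ih2]
    rw [show n+2+1 = n+3 from rfl, e1, e2]
    ring

open Real goldenRatio Filter in
lemma fib_div_gold_pow_tendsto :
    Tendsto (fun n : ℕ => (Nat.fib n : ℝ) / φ ^ n) atTop (nhds (1 / √5)) := by
  have hr : |ψ / φ| < 1 := by
    rw [abs_div, div_lt_one (abs_pos.2 goldenRatio_ne_zero)]
    have h1 : |ψ| < 1 := abs_lt.2 ⟨neg_one_lt_goldenConj, goldenConj_neg.trans one_pos⟩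
    have h2 : (1:ℝ) ≤ |φ| := by
      rw [abs_of_pos goldenRatio_pos]; exact one_lt_goldenRatio.le
    linarith
  have h0 : Tendsto (fun n : ℕ => (ψ / φ) ^ n) atTop (nhds 0) :=
    tendsto_pow_atTop_nhds_zero_of_abs_lt_one hr
  have heq : ∀ n : ℕ, (Nat.fib n : ℝ) / φ ^ n = (1 - (ψ / φ) ^ n) / √5 := by
    intro n
    rw [Real.coe_fib_eq, div_pow]
    have h5 : (√5 : ℝ) ≠ 0 := by positivity
    have hp : (φ : ℝ) ^ n ≠ 0 := pow_ne_zero _ goldenRatio_ne_zero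
    rw [div_right_comm, sub_div, div_self (by positivity : ((1 + √5) ^ n / 2 ^ n : ℝ) ≠ 0),
      ← div_pow (1 + √5 : ℝ) 2 n, div_pow ψ]
  rw [show (1 / √5 : ℝ) = (1 - 0) / √5 by norm_num]
  exact Tendsto.congr (fun n => (heq n).symm)
    ((tendsto_const_nhds.sub h0).div_const _)

open Real goldenRatio Filter in
lemma fib_ratio_tendsto (k : ℕ) :
    Tendsto (fun n : ℕ => (Nat.fib n : ℝ) / Nat.fib (n + k)) atTop (nhds (1 / φ ^ k)) := by
  have hc := fib_div_gold_pow_tendsto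
  have hck : Tendsto (fun n : ℕ => (Nat.fib (n + k) : ℝ) / φ ^ (n + k)) atTop (nhds (1 / √5)) :=
    hc.comp (tendsto_add_atTop_nat k)
  have h5 : (1 / √5 : ℝ) ≠ 0 := by positivity
  have hne : ((1 / √5 : ℝ) * φ ^ k) ≠ 0 := mul_ne_zero h5 (pow_ne_zero _ goldenRatio_ne_zero)
  have hlim : Tendsto (fun n : ℕ =>
      ((Nat.fib n : ℝ) / φ ^ n) / (((Nat.fib (n + k) : ℝ) / φ ^ (n + k)) * φ ^ k))
      atTop (nhds ((1 / √5) / ((1 / √5) * φ ^ k))) :=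
    hc.div (hck.mul tendsto_const_nhds) hne
  have hval : ((1 / √5 : ℝ) / ((1 / √5) * φ ^ k)) = 1 / φ ^ k := by
    field_simp
  rw [hval] at hlim
  apply hlim.congr'
  filter_upwards [eventually_ge_atTop 1] with n hn
  have hfib : (0:ℝ) < Nat.fib (n + k) := by
    exact_mod_cast Nat.fib_pos.2 (by omega)
  have hp : (φ:ℝ) ^ n ≠ 0 := pow_ne_zero _ goldenRatio_ne_zero
  have hpk : (φ:ℝ) ^ (n + k) ≠ 0 := pow_ne_zero _ goldenRatio_ne_zero
  field_simp
  rw [pow_add]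
  ring

open Real goldenRatio Filter in
lemma logb_fib_tendsto :
    Tendsto (fun n : ℕ => Real.logb 2 (Nat.fib (n + 2)) / n) atTop (nhds (Real.logb 2 φ)) := by
  have hc2 : Tendsto (fun n : ℕ => (Nat.fib (n + 2) : ℝ) / φ ^ (n + 2)) atTop (nhds (1 / √5)) :=
    fib_div_gold_pow_tendsto.comp (tendsto_add_atTop_nat 2)
  have h5 : (1 / √5 : ℝ) ≠ 0 := by positivity
  have hlogc : Tendsto (fun n : ℕ => Real.logb 2 ((Nat.fib (n + 2) : ℝ) / φ ^ (n + 2)))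
      atTop (nhds (Real.logb 2 (1 / √5))) :=
    (Real.continuousAt_logb h5).tendsto.comp hc2
  have hterm1 : Tendsto (fun n : ℕ =>
      Real.logb 2 ((Nat.fib (n + 2) : ℝ) / φ ^ (n + 2)) / n) atTop (nhds 0) :=
    hlogc.div_atTop tendsto_natCast_atTop_atTop
  have hterm2 : Tendsto (fun n : ℕ => (((n : ℝ) + 2) / n) * Real.logb 2 φ) atTop
      (nhds (1 * Real.logb 2 φ)) := by
    apply Tendsto.mul_const
    have : Tendsto (fun n : ℕ => 1 + 2 / (n : ℝ)) atTop (nhds (1 + 0)) :=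
      tendsto_const_nhds.add (tendsto_const_nhds.div_atTop tendsto_natCast_atTop_atTop)
    rw [add_zero] at this
    apply this.congr'
    filter_upwards [eventually_ge_atTop 1] with n hn
    have : (n:ℝ) ≠ 0 := by positivity
    field_simp
  have := hterm1.add hterm2
  rw [zero_add] at this
  rw [show (1 : ℝ) * Real.logb 2 φ = Real.logb 2 φ from one_mul _] at this
  apply this.congr'
  filter_upwards [eventually_ge_atTop 1] with n hn
  have hfib : (0:ℝ) < Nat.fib (n + 2) := by
    exact_mod_cast Nat.fib_pos.2 (by omega)
  have hp : (φ:ℝ) ^ (n + 2) ≠ 0 := pow_ne_zero _ goldenRatio_ne_zero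
  have hn0 : (n:ℝ) ≠ 0 := by positivity
  rw [Real.logb_div (ne_of_gt hfib) hp, Real.logb_pow]
  push_cast
  field_simp
  ring

open Real goldenRatio Filter in
/-- The hypercube density of the family of Fibonacci cubes equals (5-√5)/(5 log₂ φ). -/
theorem fibCube_density_tendsto :
    Filter.Tendsto
      (fun n : ℕ =>
        (2 * ((fibCube n).edgeFinset.card : ℝ)) /
          ((Fintype.card (FibV n)) * Real.logb 2 (Fintype.card (FibV n))))
      Filter.atTop
      (nhds ((5 - Real.sqrt 5) / (5 * Real.logb 2 ((1 + Real.sqrt 5) / 2)))) := by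
  have hlogφ : Real.logb 2 φ ≠ 0 :=
    ne_of_gt (Real.logb_pos (by norm_num) one_lt_goldenRatio)
  -- the component limits
  have T1 : Tendsto (fun n : ℕ => (Nat.fib (n+1) : ℝ) / Nat.fib (n+2)) atTop
      (nhds (1 / φ ^ 1)) := (fib_ratio_tendsto 1).comp (tendsto_add_atTop_nat 1)
  have T2 : Tendsto (fun n : ℕ => (Nat.fib n : ℝ) / Nat.fib (n+2)) atTop
      (nhds (1 / φ ^ 2)) := fib_ratio_tendsto 2
  have T3 : Tendsto (fun n : ℕ => ((n : ℝ) + 1) / n) atTop (nhds 1) := by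
    have h : Tendsto (fun n : ℕ => 1 + 1 / (n : ℝ)) atTop (nhds (1 + 0)) :=
      tendsto_const_nhds.add (tendsto_const_nhds.div_atTop tendsto_natCast_atTop_atTop)
    rw [add_zero] at h
    apply h.congr'
    filter_upwards [eventually_ge_atTop 1] with n hn
    have : (n:ℝ) ≠ 0 := by positivity
    field_simp
  have T4 := logb_fib_tendsto
  have Glim : Tendsto (fun n : ℕ =>
      (2/5 : ℝ) * ((Nat.fib (n+1) : ℝ) / Nat.fib (n+2)
        + 2 * (((n:ℝ)+1)/n) * ((Nat.fib n : ℝ) / Nat.fib (n+2)))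
        * (Real.logb 2 (Nat.fib (n+2)) / n)⁻¹) atTop
      (nhds ((2/5 : ℝ) * (1 / φ ^ 1 + 2 * 1 * (1 / φ ^ 2)) * (Real.logb 2 φ)⁻¹)) := by
    exact ((T1.add (((T3.const_mul 2).mul T2))).const_mul (2/5)).mul (T4.inv₀ hlogφ)
  have key : ((2/5 : ℝ) * (1 / φ ^ 1 + 2 * 1 * (1 / φ ^ 2)) * (Real.logb 2 φ)⁻¹)
      = (5 - Real.sqrt 5) / (5 * Real.logb 2 ((1 + Real.sqrt 5) / 2)) := by
    have h5 : (√5 : ℝ) ^ 2 = 5 := Real.sq_sqrt (by norm_num)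
    have hφ : (φ : ℝ) ≠ 0 := goldenRatio_ne_zero
    have hscal : (2/5 : ℝ) * (1 / φ ^ 1 + 2 * 1 * (1 / φ ^ 2)) = (5 - √5)/5 := by
      rw [pow_one]
      field_simp
      linear_combination (√5 - 3) * h5
    rw [hscal, show Real.logb 2 ((1 + Real.sqrt 5) / 2) = Real.logb 2 φ from rfl]
    rw [← div_eq_mul_inv, div_div]
  rw [← key]
  apply Glim.congr'
  filter_upwards [eventually_ge_atTop 1] with n hn
  have hVnat : Fintype.card (FibV n) = Nat.fib (n+2) := cardV_closed n
  have h2E : (2 * ((fibCube n).edgeFinset.card : ℝ))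
      = 2 * ((n:ℝ) * Nat.fib (n+1) + 2*((n:ℝ)+1) * Nat.fib n) / 5 := by
    have h1 : (fibPairs n).card = 2 * (fibCube n).edgeFinset.card := fibPairs_card_eq n
    have h2 : 5 * (fibPairs n).card = 2 * (n * Nat.fib (n+1) + 2*(n+1) * Nat.fib n) :=
      fibPairs_closed n
    rw [h1] at h2
    have : (5:ℝ) * (2 * ((fibCube n).edgeFinset.card : ℝ))
        = 2 * ((n:ℝ) * Nat.fib (n+1) + 2*((n:ℝ)+1) * Nat.fib n) := by
      exact_mod_cast congrArg (Nat.cast : ℕ → ℝ) h2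
    linarith
  rw [hVnat]
  set a := (Nat.fib (n+1) : ℝ) with ha
  set b := (Nat.fib n : ℝ) with hb
  set V := (Nat.fib (n+2) : ℝ) with hV
  set L := Real.logb 2 V with hL
  rw [h2E]
  have hV0 : V ≠ 0 := by
    rw [hV]
    have : 0 < Nat.fib (n+2) := Nat.fib_pos.2 (by omega)
    positivity
  have hn0 : (n:ℝ) ≠ 0 := by positivity
  by_cases hLz : L = 0
  · simp [hLz]
  · field_simp
end
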